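/- For any separable near-metric value space (𝒴,ℓ) with 0 < ℓ̄ < ∞, every process admitting strong universal online learning for countable classification also admits strong universal online learning for (𝒴,ℓ): SUOL_{(𝒳,ρ,ℕ,ℓ01)} ⊆ SUOL_{(𝒳,ρ,𝒴,ℓ)}. -/

import Mathlib

open MeasureTheory Filter Topology

/-- A near-metric loss structure on `Y`: symmetric, point-discerning, with a
relaxed triangle inequality with constant `c`. -/
structure NearMetric (Y : Type) where
  loss : Y → Y → ℝ
  nonneg : ∀ y₁ y₂, 0 ≤ loss y₁ y₂
  symm : ∀ y₁ y₂, loss y₁ y₂ = loss y₂ y₁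
  eq_zero_iff : ∀ y₁ y₂, loss y₁ y₂ = 0 ↔ y₁ = y₂
  c : ℝ
  c_nonneg : 0 ≤ c
  triangle : ∀ y₁ y₂ y₃, loss y₁ y₃ ≤ c * (loss y₂ y₁ + loss y₂ y₃)

namespace NearMetric

/-- `(Y, ℓ)` is separable: there is a countable `ℓ`-dense sequence. -/
def Separable {Y : Type} (L : NearMetric Y) : Prop :=
  ∃ s : ℕ → Y, ∀ y : Y, ∀ ε : ℝ, 0 < ε → ∃ i : ℕ, L.loss (s i) y < ε

/-- `0 < ℓ̄ < ∞`: the supremum of the loss is positive and finite. -/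
def BoundedPos {Y : Type} (L : NearMetric Y) : Prop :=
  (∃ y₁ y₂, 0 < L.loss y₁ y₂) ∧ (∃ M : ℝ, ∀ y₁ y₂, L.loss y₁ y₂ ≤ M)

/-- The σ-algebra on `Y` generated by `ℓ`-balls. -/
def mSpace {Y : Type} (L : NearMetric Y) : MeasurableSpace Y :=
  MeasurableSpace.generateFrom {B | ∃ (y : Y) (ε : ℝ), B = {y' | L.loss y y' < ε}}

/-- Measurability of a map into `Y` with respect to the ball σ-algebra of `L`. -/
def MeasurableFun {X Y : Type} [MeasurableSpace X] (L : NearMetric Y) (f : X → Y) : Prop :=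
  @Measurable X Y _ L.mSpace f

end NearMetric

/-- The 0–1 loss on any type with decidable equality. -/
def l01 (Y : Type) [DecidableEq Y] : NearMetric Y where
  loss y₁ y₂ := if y₁ = y₂ then 0 else 1
  nonneg := by intro a b; split <;> norm_num
  symm := by intro a b; simp [eq_comm]
  eq_zero_iff := by intro a b; split <;> simp_all
  c := 1
  c_nonneg := by norm_num
  triangle := by
    intro a b c
    by_cases h1 : a = c <;> by_cases h2 : b = a <;> by_cases h3 : b = c <;>
      simp_all

/-- An online learning rule: a sequence of measurable maps
`f t : 𝒳^t × 𝒴^t × 𝒳 → 𝒴` (the history at time `t+1` has length `t`). -/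
def IsLearningRule {X Y : Type} [MeasurableSpace X] (L : NearMetric Y)
    (f : (t : ℕ) → (Fin t → X) → (Fin t → Y) → X → Y) : Prop :=
  letI : MeasurableSpace Y := L.mSpace
  ∀ t : ℕ, Measurable fun p : (Fin t → X) × (Fin t → Y) × X => f t p.1 p.2.1 p.2.2

/-- The average loss of learning rule `f` on target `fstar` under process `Xp`
up to horizon `T`, at sample `ω`. -/
noncomputable def avgLoss {X Y Ω : Type} (L : NearMetric Y) (Xp : ℕ → Ω → X)
    (f : (t : ℕ) → (Fin t → X) → (Fin t → Y) → X → Y) (fstar : X → Y)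
    (T : ℕ) (ω : Ω) : ℝ :=
  (T : ℝ)⁻¹ * ∑ t ∈ Finset.range T,
    L.loss (f t (fun i => Xp i.1 ω) (fun i => fstar (Xp i.1 ω)) (Xp t ω)) (fstar (Xp t ω))

/-- The rule `f` is (strongly) consistent for target `fstar` under the process `Xp`. -/
def Consistent {X Y Ω : Type} [MeasurableSpace Ω] (μ : Measure Ω) (L : NearMetric Y)
    (Xp : ℕ → Ω → X) (f : (t : ℕ) → (Fin t → X) → (Fin t → Y) → X → Y)
    (fstar : X → Y) : Prop :=
  ∀ᵐ ω ∂μ, Tendsto (fun T => avgLoss L Xp f fstar T ω) atTop (𝓝 0)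

/-- `Xp ∈ SUOL`: the process admits strong universal online learning for
the value space `(Y, L)`. -/
def SUOL {X Y Ω : Type} [MeasurableSpace X] [MeasurableSpace Ω] (μ : Measure Ω)
    (L : NearMetric Y) (Xp : ℕ → Ω → X) : Prop :=
  ∃ f : (t : ℕ) → (Fin t → X) → (Fin t → Y) → X → Y,
    IsLearningRule L f ∧
    ∀ fstar : X → Y, L.MeasurableFun fstar → Consistent μ L Xp f fstar

section AuxLemmas

lemma measurable_nat_cases {α β : Type*} [MeasurableSpace α] [MeasurableSpace β]
    {N : α → ℕ} {F : ℕ → α → β} (hN : Measurable N) (hF : ∀ n, Measurable (F n)) :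
    Measurable fun a => F (N a) a := by
  intro E hE
  have h : (fun a => F (N a) a) ⁻¹' E = ⋃ n, (N ⁻¹' {n} ∩ F n ⁻¹' E) := by
    ext a
    simp only [Set.mem_preimage, Set.mem_iUnion, Set.mem_inter_iff, Set.mem_singleton_iff]
    exact ⟨fun h => ⟨N a, rfl, h⟩, fun ⟨n, hn, h⟩ => hn ▸ h⟩
  rw [h]
  exact MeasurableSet.iUnion fun n => (hN (measurableSet_singleton n)).inter (hF n hE)

open Classical in
noncomputable def maxQual : ℕ → (ℕ → Prop) → ℕ
  | 0, _ => 0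
  | (B+1), Q => if Q (B+1) then B+1 else maxQual B Q

lemma maxQual_le (B : ℕ) (Q : ℕ → Prop) : maxQual B Q ≤ B := by
  induction B with
  | zero => simp [maxQual]
  | succ B ih =>
    simp only [maxQual]
    split_ifs
    · exact le_refl _
    · exact ih.trans (Nat.le_succ B)

lemma maxQual_qual (B : ℕ) (Q : ℕ → Prop) (h0 : Q 0) : Q (maxQual B Q) := by
  induction B with
  | zero => simpa [maxQual] using h0
  | succ B ih =>
    simp only [maxQual]
    split_ifs with h
    · exact h
    · exact ih

lemma le_maxQual {B j : ℕ} {Q : ℕ → Prop} (hj : j ≤ B) (hQ : Q j) : j ≤ maxQual B Q := by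
  induction B with
  | zero => simpa [maxQual] using hj
    
  | succ B ih =>
    simp only [maxQual]
    split_ifs with h
    · exact hj
    · have hj' : j ≤ B := by
        rcases Nat.lt_or_ge j (B+1) with h' | h'
        · exact Nat.lt_succ_iff.1 h'
        · exact absurd ((le_antisymm hj h') ▸ hQ) h
      exact ih hj'

lemma measurable_maxQual {α : Type*} [MeasurableSpace α] (B : ℕ) (Q : ℕ → α → Prop)
    (hQ : ∀ k, MeasurableSet {a | Q k a}) :
    Measurable fun a => maxQual B (fun k => Q k a) := by
  induction B with
  | zero => simpa [maxQual] using measurable_const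
  | succ B ih =>
    simp only [maxQual]
    exact Measurable.ite (hQ (B+1)) measurable_const ih

end AuxLemmas


lemma det_combine (M : ℝ) (hM : 0 < M) (eps : ℕ → ℝ)
    (heq : ∀ k, eps k = M * (2:ℝ)⁻¹ ^ (k+1))
    (lam : ℕ → ℕ → ℝ) (sel : ℕ → ℕ)
    (hnn : ∀ k t, 0 ≤ lam k t) (hub : ∀ k t, lam k t ≤ M)
    (hsel_le : ∀ t, sel t ≤ Nat.sqrt t)
    (hqual : ∀ t, ∑ i ∈ Finset.range t, lam (sel t) i ≤ 2 * eps (sel t) * t)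
    (hmax : ∀ t j, j ≤ Nat.sqrt t → (∑ i ∈ Finset.range t, lam j i) ≤ 2 * eps j * t → j ≤ sel t)
    (hlim : ∀ k, ∃ N : ℕ, ∀ t, N ≤ t → (∑ i ∈ Finset.range t, lam k i) ≤ 2 * eps k * t) :
    Tendsto (fun T : ℕ => (T:ℝ)⁻¹ * ∑ t ∈ Finset.range T, lam (sel t) t) atTop (𝓝 0) := by
  classical
  rw [Metric.tendsto_atTop]
  intro θ hθ
  obtain ⟨j, hj⟩ : ∃ j : ℕ, (2:ℝ)⁻¹ ^ j < θ / (8 * M) :=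
    exists_pow_lt_of_lt_one (by positivity) (by norm_num)
  have hjθ : 2 * M * (2:ℝ)⁻¹ ^ j ≤ θ / 4 := by
    have h2M : (0:ℝ) < 2 * M := by positivity
    have := mul_lt_mul_of_pos_left hj h2M
    have heq4 : 2 * M * (θ / (8 * M)) = θ / 4 := by field_simp; ring
    linarith [heq4 ▸ this]
  obtain ⟨Nj, hNj⟩ := hlim j
  set τ : ℕ := max Nj (j * j) with hτdef
  have hseltau : ∀ t, τ ≤ t → j ≤ sel t := by
    intro t ht
    exact hmax t j (Nat.le_sqrt.2 (le_trans (le_max_right _ _) ht))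
      (hNj t (le_trans (le_max_left _ _) ht))
  -- geometric tail bound
  have hgeo : ∀ B : ℕ, (∑ k ∈ Finset.Icc j B, (2:ℝ)⁻¹ ^ (k+1)) ≤ (2:ℝ)⁻¹ ^ j := by
    intro B
    rw [← Finset.Ico_add_one_right_eq_Icc, Finset.sum_Ico_eq_sum_range]
    have hterm : ∀ i, (2:ℝ)⁻¹ ^ (j + i + 1) = (2:ℝ)⁻¹ ^ (j+1) * (2:ℝ)⁻¹ ^ i := by
      intro i; ring
    rw [Finset.sum_congr rfl fun i _ => hterm i, ← Finset.mul_sum]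
    have hsum2 : (∑ i ∈ Finset.range (B + 1 - j), (2:ℝ)⁻¹ ^ i) ≤ 2 := by
      have := sum_geometric_two_le (B + 1 - j)
      simpa [one_div] using this
    calc (2:ℝ)⁻¹ ^ (j+1) * ∑ i ∈ Finset.range (B + 1 - j), (2:ℝ)⁻¹ ^ i
        ≤ (2:ℝ)⁻¹ ^ (j+1) * 2 := by
          apply mul_le_mul_of_nonneg_left hsum2 (by positivity)
      _ = (2:ℝ)⁻¹ ^ j := by ring
  -- key combinatorial bound
  have key : ∀ T, τ ≤ T → (∑ t ∈ Finset.range T, lam (sel t) t)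
      ≤ M * τ + 2 * M * (2:ℝ)⁻¹ ^ j * T + ((Nat.sqrt T : ℝ) + 1) * M := by
    intro T hT
    have h1 : ∑ t ∈ Finset.Ico 0 τ, lam (sel t) t ≤ M * τ := by
      calc ∑ t ∈ Finset.Ico 0 τ, lam (sel t) t ≤ ∑ _t ∈ Finset.Ico 0 τ, M :=
            Finset.sum_le_sum fun t _ => hub _ t
        _ = M * τ := by simp [Finset.sum_const, Nat.card_Ico, mul_comm]
    have h2 : ∑ t ∈ Finset.Ico τ T, lam (sel t) t
        ≤ 2 * M * (2:ℝ)⁻¹ ^ j * T + ((Nat.sqrt T : ℝ) + 1) * M := by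
      have hmaps : ∀ t ∈ Finset.Ico τ T, sel t ∈ Finset.Icc j (Nat.sqrt T) := by
        intro t ht
        rw [Finset.mem_Ico] at ht
        exact Finset.mem_Icc.2 ⟨hseltau t ht.1, le_trans (hsel_le t) (Nat.sqrt_le_sqrt ht.2.le)⟩
      rw [← Finset.sum_fiberwise_of_maps_to hmaps]
      have inner : ∀ k ∈ Finset.Icc j (Nat.sqrt T),
          (∑ t ∈ (Finset.Ico τ T).filter (fun t => sel t = k), lam (sel t) t)
            ≤ 2 * M * (2:ℝ)⁻¹ ^ (k+1) * T + M := by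
        intro k _hk
        rcases Finset.eq_empty_or_nonempty ((Finset.Ico τ T).filter (fun t => sel t = k)) with he | hne
        · rw [he]; simp; positivity
        · have ht'mem := Finset.max'_mem _ hne
          set t' := Finset.max' _ hne with ht'def
          rw [Finset.mem_filter, Finset.mem_Ico] at ht'mem
          have hsum_eq : (∑ t ∈ (Finset.Ico τ T).filter (fun t => sel t = k), lam (sel t) t)
              = ∑ t ∈ (Finset.Ico τ T).filter (fun t => sel t = k), lam k t :=
            Finset.sum_congr rfl fun t ht => by rw [(Finset.mem_filter.1 ht).2]
          rw [hsum_eq]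
          have hsub : (Finset.Ico τ T).filter (fun t => sel t = k) ⊆ Finset.range (t' + 1) := by
            intro x hx
            exact Finset.mem_range.2 (Nat.lt_succ_of_le (Finset.le_max' _ x hx))
          have ht'T : (t' : ℝ) ≤ T := by exact_mod_cast ht'mem.1.2.le
          calc (∑ t ∈ (Finset.Ico τ T).filter (fun t => sel t = k), lam k t)
              ≤ ∑ t ∈ Finset.range (t'+1), lam k t :=
                Finset.sum_le_sum_of_subset_of_nonneg hsub (fun i _ _ => hnn k i)
            _ = (∑ t ∈ Finset.range t', lam k t) + lam k t' := Finset.sum_range_succ _ _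
            _ ≤ 2 * eps k * t' + M := add_le_add (by rw [← ht'mem.2]; exact hqual t') (hub k t')
            _ = 2 * M * (2:ℝ)⁻¹ ^ (k+1) * t' + M := by rw [heq k]; ring
            _ ≤ 2 * M * (2:ℝ)⁻¹ ^ (k+1) * T + M := by
                have : (0:ℝ) ≤ 2 * M * (2:ℝ)⁻¹ ^ (k+1) := by positivity
                nlinarith
      have hcard : ((Finset.Icc j (Nat.sqrt T)).card : ℝ) ≤ (Nat.sqrt T : ℝ) + 1 := by
        have h : (Finset.Icc j (Nat.sqrt T)).card ≤ Nat.sqrt T + 1 := by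
          rw [Nat.card_Icc]; omega
        calc ((Finset.Icc j (Nat.sqrt T)).card : ℝ) ≤ ((Nat.sqrt T + 1 : ℕ) : ℝ) := by
              exact_mod_cast h
          _ = (Nat.sqrt T : ℝ) + 1 := by push_cast; ring
      calc (∑ k ∈ Finset.Icc j (Nat.sqrt T),
              ∑ t ∈ (Finset.Ico τ T).filter (fun t => sel t = k), lam (sel t) t)
          ≤ ∑ k ∈ Finset.Icc j (Nat.sqrt T), (2 * M * (2:ℝ)⁻¹ ^ (k+1) * T + M) :=
            Finset.sum_le_sum inner
        _ = 2 * M * T * (∑ k ∈ Finset.Icc j (Nat.sqrt T), (2:ℝ)⁻¹ ^ (k+1))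
              + ((Finset.Icc j (Nat.sqrt T)).card : ℝ) * M := by
            rw [Finset.sum_add_distrib, Finset.sum_const, nsmul_eq_mul, Finset.mul_sum]
            congr 1
            exact Finset.sum_congr rfl fun k _ => by ring
        _ ≤ 2 * M * T * (2:ℝ)⁻¹ ^ j + ((Nat.sqrt T : ℝ) + 1) * M := by
            have h2MT : (0:ℝ) ≤ 2 * M * T := by positivity
            have := mul_le_mul_of_nonneg_left (hgeo (Nat.sqrt T)) h2MT
            have := mul_le_mul_of_nonneg_right hcard hM.le
            linarith
        _ = 2 * M * (2:ℝ)⁻¹ ^ j * T + ((Nat.sqrt T : ℝ) + 1) * M := by ring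
    have hsplit : (∑ t ∈ Finset.range T, lam (sel t) t)
        = (∑ t ∈ Finset.Ico 0 τ, lam (sel t) t) + ∑ t ∈ Finset.Ico τ T, lam (sel t) t := by
      rw [Finset.range_eq_Ico, ← Finset.sum_Ico_consecutive _ (Nat.zero_le τ) hT]
    rw [hsplit]
    linarith
  -- choose the threshold
  obtain ⟨N₁, hN₁⟩ := exists_nat_ge (4 * M * τ / θ)
  obtain ⟨K₀, hK₀⟩ := exists_nat_ge (8 * M / θ)
  set K := K₀ + 1 with hKdef
  refine ⟨N₁ + K * K + τ + 1, fun T hT => ?_⟩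
  have hTτ : τ ≤ T := by omega
  have hT1 : 1 ≤ T := by omega
  have hTpos : (0:ℝ) < T := by exact_mod_cast Nat.lt_of_lt_of_le Nat.zero_lt_one hT1
  have hsqK : K ≤ Nat.sqrt T := Nat.le_sqrt.2 (by omega)
  have hsq1 : 1 ≤ Nat.sqrt T := le_trans (by omega) hsqK
  have hsqsq : Nat.sqrt T * Nat.sqrt T ≤ T := Nat.sqrt_le T
  have hS1 : (1:ℝ) ≤ (Nat.sqrt T : ℝ) := by exact_mod_cast hsq1
  have hSS : (Nat.sqrt T : ℝ) * (Nat.sqrt T : ℝ) ≤ (T:ℝ) := by exact_mod_cast hsqsq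
  have h8 : 8 * M / θ ≤ (Nat.sqrt T : ℝ) := by
    have hKS : (K:ℝ) ≤ (Nat.sqrt T : ℝ) := by exact_mod_cast hsqK
    have : (K₀:ℝ) ≤ (K:ℝ) := by push_cast [hKdef]; linarith
    linarith
  have a1 : M * τ ≤ θ/4 * T := by
    have hN₁T : (N₁:ℝ) ≤ (T:ℝ) := by exact_mod_cast (by omega : N₁ ≤ T)
    have : 4 * M * τ / θ ≤ (T:ℝ) := le_trans hN₁ hN₁T
    rw [div_le_iff₀ hθ] at this
    linarith
  have a3 : ((Nat.sqrt T : ℝ) + 1) * M ≤ θ/4 * T := by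
    have h1 : ((Nat.sqrt T : ℝ) + 1) * M ≤ 2 * (Nat.sqrt T : ℝ) * M := by nlinarith
    have h2 : 8 * M ≤ θ * (Nat.sqrt T : ℝ) := by
      rw [div_le_iff₀ hθ] at h8; linarith
    nlinarith
  have a2 : 2 * M * (2:ℝ)⁻¹ ^ j * T ≤ θ/4 * T := by
    nlinarith
  have hkey := key T hTτ
  have hsum_nn : 0 ≤ ∑ t ∈ Finset.range T, lam (sel t) t :=
    Finset.sum_nonneg fun t _ => hnn _ t
  have hC : (∑ t ∈ Finset.range T, lam (sel t) t) ≤ (3*θ/4) * T := by linarith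
  have havg : (T:ℝ)⁻¹ * (∑ t ∈ Finset.range T, lam (sel t) t) ≤ 3*θ/4 := by
    rw [inv_mul_le_iff₀ hTpos]
    linarith
  rw [Real.dist_eq, sub_zero, abs_of_nonneg (mul_nonneg (inv_nonneg.2 hTpos.le) hsum_nn)]
  have : (0:ℝ) < θ := hθ
  linarith

section Constructionx

variable {X Y : Type} [MeasurableSpace X] (L : NearMetric Y) (s : ℕ → Y) (eps : ℕ → ℝ)
  (f : (t : ℕ) → (Fin t → X) → (Fin t → ℕ) → X → ℕ)

open Classical in
/-- quantizer at scale `eps k` -/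
noncomputable def quantF (k : ℕ) (y : Y) : ℕ :=
  if h : ∃ i, L.loss (s i) y < eps k then Nat.find h else 0

/-- expert `k`'s prediction -/
noncomputable def predF (k t : ℕ) (xs : Fin t → X) (ys : Fin t → Y) (x : X) : Y :=
  s (f t xs (fun i => quantF L s eps k (ys i)) x)

/-- expert `k`'s cumulative loss on the history -/
noncomputable def cumF (k t : ℕ) (xs : Fin t → X) (ys : Fin t → Y) : ℝ :=
  ∑ i : Fin t, L.loss
    (predF L s eps f k i.1 (fun j => xs (Fin.castLE i.isLt.le j))
      (fun j => ys (Fin.castLE i.isLt.le j)) (xs i)) (ys i)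

/-- selected expert index -/
noncomputable def selF (t : ℕ) (xs : Fin t → X) (ys : Fin t → Y) : ℕ :=
  maxQual (Nat.sqrt t) (fun k => cumF L s eps f k t xs ys ≤ 2 * eps k * t)

/-- the combined learning rule -/
noncomputable def combF (t : ℕ) (xs : Fin t → X) (ys : Fin t → Y) (x : X) : Y :=
  predF L s eps f (selF L s eps f t xs ys) t xs ys x

lemma hball_meas (y₀ : Y) (r : ℝ) : MeasurableSet[L.mSpace] {y | L.loss y₀ y < r} :=
  MeasurableSpace.measurableSet_generateFrom ⟨y₀, r, rfl⟩

lemma hloss_meas (y₀ : Y) : @Measurable Y ℝ L.mSpace _ (fun y => L.loss y₀ y) := by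
  letI : MeasurableSpace Y := L.mSpace
  apply measurable_of_Iio
  intro r
  exact hball_meas L y₀ r

lemma quantF_meas (hdense : ∀ y : Y, ∀ ε : ℝ, 0 < ε → ∃ i, L.loss (s i) y < ε)
    (heps : ∀ k, 0 < eps k) (k : ℕ) :
    @Measurable Y ℕ L.mSpace _ (quantF L s eps k) := by
  letI : MeasurableSpace Y := L.mSpace
  have hex : ∀ y : Y, ∃ i, L.loss (s i) y < eps k := fun y => hdense y (eps k) (heps k)
  apply measurable_to_countable'
  intro n
  have hset : quantF L s eps k ⁻¹' {n}
      = {y | L.loss (s n) y < eps k} ∩ ⋂ (m) (_ : m < n), {y | L.loss (s m) y < eps k}ᶜ := by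
    ext y
    simp only [Set.mem_preimage, Set.mem_singleton_iff, quantF, dif_pos (hex y),
      Set.mem_inter_iff, Set.mem_setOf_eq, Set.mem_iInter, Set.mem_compl_iff]
    rw [Nat.find_eq_iff]
  rw [hset]
  exact (hball_meas L (s n) (eps k)).inter
    (MeasurableSet.iInter fun m => MeasurableSet.iInter fun _ => (hball_meas L (s m) (eps k)).compl)

lemma l01_mSpace_top : (l01 ℕ).mSpace = (⊤ : MeasurableSpace ℕ) := by
  refine le_antisymm le_top ?_
  intro S _
  have hsing : ∀ n : ℕ, MeasurableSet[(l01 ℕ).mSpace] {n} := by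
    intro n
    have : {y' : ℕ | (l01 ℕ).loss n y' < 1} = {n} := by
      ext m
      simp only [Set.mem_setOf_eq, Set.mem_singleton_iff, l01]
      split_ifs with h
      · simp [h.symm]
      · simp [Ne.symm h]
    have hgen : MeasurableSet[(l01 ℕ).mSpace] {y' : ℕ | (l01 ℕ).loss n y' < 1} :=
      MeasurableSpace.measurableSet_generateFrom ⟨n, 1, rfl⟩
    rwa [this] at hgen
  have : S = ⋃ n ∈ S, {n} := by simp
  rw [this]
  exact MeasurableSet.biUnion (Set.to_countable S) fun n _ => hsing n

lemma combF_isLearningRule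
    (hdense : ∀ y : Y, ∀ ε : ℝ, 0 < ε → ∃ i, L.loss (s i) y < ε)
    (heps : ∀ k, 0 < eps k)
    (hf : IsLearningRule (l01 ℕ) f) :
    IsLearningRule L (combF L s eps f) := by
  letI : MeasurableSpace Y := L.mSpace
  have hft : ∀ u : ℕ, Measurable
      fun p : (Fin u → X) × (Fin u → ℕ) × X => f u p.1 p.2.1 p.2.2 := by
    intro u
    have h := hf u
    rw [l01_mSpace_top] at h
    exact h
  have hquant : ∀ k, Measurable (quantF L s eps k) := quantF_meas L s eps hdense heps
  have hs_meas : Measurable s := by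
    have : @Measurable ℕ Y ⊤ _ s := measurable_from_top
    exact this.mono le_top le_rfl
  intro t
  set H := (Fin t → X) × (Fin t → Y) × X
  -- generic composition with f
  have hnp : ∀ (k u : ℕ) (a : H → Fin u → X) (b : H → Fin u → Y) (c : H → X),
      Measurable a → Measurable b → Measurable c →
      Measurable (fun p : H => f u (a p) (fun i => quantF L s eps k (b p i)) (c p)) := by
    intro k u a b c ha hb hc
    have hq : Measurable (fun p : H => (fun i : Fin u => quantF L s eps k (b p i))) :=
      measurable_pi_lambda _ fun i => (hquant k).comp ((measurable_pi_apply i).comp hb)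
    exact (hft u).comp (ha.prodMk (hq.prodMk hc))
  have hrestrX : ∀ i : Fin t, Measurable
      (fun p : H => (fun j : Fin i.1 => p.1 (Fin.castLE i.isLt.le j))) := fun i =>
    measurable_pi_lambda _ fun j => (measurable_pi_apply _).comp measurable_fst
  have hrestrY : ∀ i : Fin t, Measurable
      (fun p : H => (fun j : Fin i.1 => p.2.1 (Fin.castLE i.isLt.le j))) := fun i =>
    measurable_pi_lambda _ fun j =>
      (measurable_pi_apply _).comp (measurable_fst.comp measurable_snd)
  have hevalX : ∀ i : Fin t, Measurable (fun p : H => p.1 i) := fun i =>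
    (measurable_pi_apply _).comp measurable_fst
  have hevalY : ∀ i : Fin t, Measurable (fun p : H => p.2.1 i) := fun i =>
    (measurable_pi_apply _).comp (measurable_fst.comp measurable_snd)
  have hcum : ∀ k, Measurable (fun p : H => cumF L s eps f k t p.1 p.2.1) := by
    intro k
    apply Finset.measurable_sum
    intro i _
    have hN : Measurable (fun p : H =>
        f i.1 (fun j => p.1 (Fin.castLE i.isLt.le j))
          (fun j => quantF L s eps k (p.2.1 (Fin.castLE i.isLt.le j))) (p.1 i)) :=
      hnp k i.1 _ _ _ (hrestrX i) (hrestrY i) (hevalX i)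
    exact measurable_nat_cases hN fun n => (hloss_meas L (s n)).comp (hevalY i)
  have hsel : Measurable (fun p : H => selF L s eps f t p.1 p.2.1) := by
    apply measurable_maxQual
    intro k
    exact measurableSet_le (hcum k) measurable_const
  exact measurable_nat_cases hsel fun k =>
    hs_meas.comp (hnp k t _ _ _ measurable_fst (measurable_fst.comp measurable_snd)
      (measurable_snd.comp measurable_snd))

end Constructionx

/-- For any separable near-metric value space `(Y, L)` with
`0 < ℓ̄ < ∞`, every process admitting strong universal online learning for countable
classification `(ℕ, ℓ01)` also admits it for `(Y, L)`. -/
theorem suol_countable_subset_suol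
    {𝒳 : Type} [MetricSpace 𝒳] [TopologicalSpace.SeparableSpace 𝒳]
    [MeasurableSpace 𝒳] [BorelSpace 𝒳]
    {Y : Type} (L : NearMetric Y) (hsep : L.Separable) (hbd : L.BoundedPos)
    {Ω : Type} [MeasurableSpace Ω] (μ : Measure Ω) [IsProbabilityMeasure μ]
    (Xp : ℕ → Ω → 𝒳) (hX : ∀ t, Measurable (Xp t)) :
    SUOL μ (l01 ℕ) Xp → SUOL μ L Xp := by
  classical
  rintro ⟨f, hf_rule, hf_cons⟩
  obtain ⟨s, hs⟩ := hsep
  obtain ⟨⟨y₁, y₂, hpos⟩, M, hM⟩ := hbd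
  have hM0 : 0 < M := lt_of_lt_of_le hpos (hM y₁ y₂)
  set eps : ℕ → ℝ := fun k => M * (2:ℝ)⁻¹ ^ (k+1) with heps_def
  have heps : ∀ k, 0 < eps k := fun k => by simp only [heps_def]; positivity
  refine ⟨combF L s eps f, combF_isLearningRule L s eps f hs heps hf_rule, ?_⟩
  intro fstar hfstar
  have hquant := quantF_meas L s eps hs heps
  have hgk : ∀ k, (l01 ℕ).MeasurableFun (fun x => quantF L s eps k (fstar x)) := by
    intro k
    have h1 : Measurable (fun x : 𝒳 => quantF L s eps k (fstar x)) := (hquant k).comp hfstar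
    unfold NearMetric.MeasurableFun
    rw [l01_mSpace_top]
    exact h1
  have hae : ∀ᵐ ω ∂μ, ∀ k, Tendsto
      (fun T => avgLoss (l01 ℕ) Xp f (fun x => quantF L s eps k (fstar x)) T ω) atTop (𝓝 0) :=
    ae_all_iff.2 fun k => hf_cons _ (hgk k)
  show ∀ᵐ ω ∂μ, Tendsto (fun T => avgLoss L Xp (combF L s eps f) fstar T ω) atTop (𝓝 0)
  filter_upwards [hae] with ω hω
  set lam : ℕ → ℕ → ℝ := fun k t => L.loss
      (s (f t (fun i : Fin t => Xp i.1 ω)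
        (fun i : Fin t => quantF L s eps k (fstar (Xp i.1 ω))) (Xp t ω)))
      (fstar (Xp t ω)) with hlam_def
  set sel : ℕ → ℕ := fun t => selF L s eps f t (fun i : Fin t => Xp i.1 ω)
      (fun i : Fin t => fstar (Xp i.1 ω)) with hsel_def
  have hnn : ∀ k t, 0 ≤ lam k t := fun k t => L.nonneg _ _
  have hub : ∀ k t, lam k t ≤ M := fun k t => hM _ _
  have hcum_eq : ∀ k T, cumF L s eps f k T (fun i : Fin T => Xp i.1 ω)
      (fun i => fstar (Xp i.1 ω)) = ∑ i ∈ Finset.range T, lam k i := by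
    intro k T
    rw [← Fin.sum_univ_eq_sum_range (fun i => lam k i) T]
    simp only [cumF, predF, hlam_def, Fin.coe_castLE]
  have hsel_le : ∀ t, sel t ≤ Nat.sqrt t := fun t => maxQual_le _ _
  have hQ0 : ∀ t, cumF L s eps f 0 t (fun i : Fin t => Xp i.1 ω)
      (fun i => fstar (Xp i.1 ω)) ≤ 2 * eps 0 * t := by
    intro t
    rw [hcum_eq]
    calc (∑ i ∈ Finset.range t, lam 0 i) ≤ ∑ _i ∈ Finset.range t, M :=
          Finset.sum_le_sum fun i _ => hub 0 i
      _ = M * t := by simp [mul_comm]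
      _ = 2 * eps 0 * t := by simp only [heps_def]; ring
  have hsel_qual : ∀ t, (∑ i ∈ Finset.range t, lam (sel t) i) ≤ 2 * eps (sel t) * t := by
    intro t
    have h : cumF L s eps f (sel t) t (fun i : Fin t => Xp i.1 ω)
        (fun i => fstar (Xp i.1 ω)) ≤ 2 * eps (sel t) * t :=
      maxQual_qual (Nat.sqrt t)
        (fun k => cumF L s eps f k t (fun i : Fin t => Xp i.1 ω)
          (fun i => fstar (Xp i.1 ω)) ≤ 2 * eps k * t) (hQ0 t)
    rw [hcum_eq] at h
    exact h
  have hsel_max : ∀ t j, j ≤ Nat.sqrt t →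
      (∑ i ∈ Finset.range t, lam j i) ≤ 2 * eps j * t → j ≤ sel t := by
    intro t j hj hq
    exact le_maxQual hj (show cumF L s eps f j t (fun i : Fin t => Xp i.1 ω)
      (fun i => fstar (Xp i.1 ω)) ≤ 2 * eps j * t by rw [hcum_eq]; exact hq)
  have hlim : ∀ k, ∃ N : ℕ, ∀ T, N ≤ T →
      (∑ i ∈ Finset.range T, lam k i) ≤ 2 * eps k * T := by
    intro k
    set z : ℕ → ℝ := fun t => (l01 ℕ).loss
        (f t (fun i : Fin t => Xp i.1 ω)
          (fun i : Fin t => quantF L s eps k (fstar (Xp i.1 ω))) (Xp t ω))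
        (quantF L s eps k (fstar (Xp t ω))) with hz_def
    have hznn : ∀ t, 0 ≤ z t := fun t => (l01 ℕ).nonneg _ _
    have hstep : ∀ t, lam k t ≤ eps k + M * z t := by
      intro t
      by_cases h : f t (fun i : Fin t => Xp i.1 ω)
          (fun i : Fin t => quantF L s eps k (fstar (Xp i.1 ω))) (Xp t ω)
          = quantF L s eps k (fstar (Xp t ω))
      · have hz0 : z t = 0 := by simp [hz_def, l01, h]
        have hq : L.loss (s (quantF L s eps k (fstar (Xp t ω)))) (fstar (Xp t ω)) < eps k := by
          have hex : ∃ i, L.loss (s i) (fstar (Xp t ω)) < eps k := hs _ _ (heps k)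
          simp only [quantF, dif_pos hex]
          exact Nat.find_spec hex
        have hlt : lam k t < eps k := by
          have : lam k t = L.loss (s (quantF L s eps k (fstar (Xp t ω)))) (fstar (Xp t ω)) := by
            simp only [hlam_def]
            rw [h]
          rw [this]
          exact hq
        rw [hz0, mul_zero, add_zero]
        exact hlt.le
      · have hz1 : z t = 1 := by simp [hz_def, l01, h]
        rw [hz1, mul_one]
        have h1 := hub k t
        have h2 := heps k
        linarith
    have havg := hω k
    rw [Metric.tendsto_atTop] at havg
    have hpos' : 0 < eps k / M := div_pos (heps k) hM0
    obtain ⟨N, hN⟩ := havg (eps k / M) hpos'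
    refine ⟨max N 1, fun T hT => ?_⟩
    have hT1 : 1 ≤ T := le_trans (le_max_right _ _) hT
    have hTpos : (0:ℝ) < T := by exact_mod_cast hT1
    have hZ : avgLoss (l01 ℕ) Xp f (fun x => quantF L s eps k (fstar x)) T ω
        = (T:ℝ)⁻¹ * ∑ t ∈ Finset.range T, z t := rfl
    have hdist := hN T (le_trans (le_max_left _ _) hT)
    rw [Real.dist_eq, sub_zero, hZ] at hdist
    have hZnn : 0 ≤ ∑ t ∈ Finset.range T, z t := Finset.sum_nonneg fun t _ => hznn t
    rw [abs_of_nonneg (mul_nonneg (inv_nonneg.2 hTpos.le) hZnn)] at hdist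
    have hZsum : (∑ t ∈ Finset.range T, z t) ≤ eps k / M * T := by
      have hmul := mul_le_mul_of_nonneg_left hdist.le hTpos.le
      rw [← mul_assoc, mul_inv_cancel₀ hTpos.ne', one_mul] at hmul
      linarith
    calc (∑ i ∈ Finset.range T, lam k i)
        ≤ ∑ i ∈ Finset.range T, (eps k + M * z i) := Finset.sum_le_sum fun i _ => hstep i
      _ = eps k * T + M * ∑ t ∈ Finset.range T, z t := by
          rw [Finset.sum_add_distrib, Finset.sum_const, Finset.card_range, ← Finset.mul_sum,
            nsmul_eq_mul]
          ring
      _ ≤ eps k * T + M * (eps k / M * T) := by nlinarith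
      _ = 2 * eps k * T := by field_simp; ring
  have hdet := det_combine M hM0 eps (fun k => by simp only [heps_def]) lam sel hnn hub
    hsel_le hsel_qual hsel_max hlim
  exact hdet
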